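/- Let X = {1/n : n ∈ ℕ, n ≥ 1} ⊆ ℝ. Then the Assouad dimension of X equals 1. -/

import Mathlib

open Set Metric

noncomputable section

/-- `coversWith X r n` : `X` can be covered by `n` sets each of diameter at most `r`. -/
def coversWith {α : Type*} [PseudoMetricSpace α] (X : Set α) (r : ℝ) (n : ℕ) : Prop :=
  ∃ B : Fin n → Set α, (∀ i, EMetric.diam (B i) ≤ ENNReal.ofReal r) ∧ X ⊆ ⋃ i, B i

/-- The covering number `N_r(X)`: the minimal number of sets of diameter at most `r`
needed to cover `X`. -/
noncomputable def coverNum {α : Type*} [PseudoMetricSpace α] (X : Set α) (r : ℝ) : ℕ :=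
  sInf {n : ℕ | coversWith X r n}

/-- Upper box dimension: infimum of `s ≥ 0` such that `N_r(X) ≤ C r^{-s}` for all `r ∈ (0,1)`. -/
noncomputable def upperBoxDim {α : Type*} [PseudoMetricSpace α] (X : Set α) : ℝ :=
  sInf {s : ℝ | 0 ≤ s ∧ ∃ C > (0:ℝ), ∀ r ∈ Ioo (0:ℝ) 1,
    (coverNum X r : ℝ) ≤ C * r ^ (-s)}

/-- Assouad dimension (localisation at arbitrary centres `x`). -/
noncomputable def assouadDim {α : Type*} [PseudoMetricSpace α] (X : Set α) : ℝ :=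
  sInf {s : ℝ | 0 ≤ s ∧ ∃ C > (0:ℝ), ∀ R > (0:ℝ), ∀ r ∈ Ioo (0:ℝ) R, ∀ x : α,
    (coverNum (X ∩ closedBall x R) r : ℝ) ≤ C * (R / r) ^ s}

/-- Assouad dimension (localisation at centres `x ∈ X`). -/
noncomputable def assouadDimOn {α : Type*} [PseudoMetricSpace α] (X : Set α) : ℝ :=
  sInf {s : ℝ | 0 ≤ s ∧ ∃ C > (0:ℝ), ∀ R > (0:ℝ), ∀ r ∈ Ioo (0:ℝ) R, ∀ x ∈ X,
    (coverNum (X ∩ closedBall x R) r : ℝ) ≤ C * (R / r) ^ s}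

/-- Upper θ-intermediate dimension, for `θ ∈ (0,1]`: infimum of `s ≥ 0` such that for all
`ε > 0` and all sufficiently small `δ ∈ (0,1)` there is a cover of `X` with all diameters in
`[δ^(1/θ), δ]` and `s`-cost less than `ε`. -/
noncomputable def interDim {α : Type*} [PseudoMetricSpace α] (θ : ℝ) (X : Set α) : ℝ :=
  sInf {s : ℝ | 0 ≤ s ∧ ∀ ε > (0:ℝ), ∃ δ₀ ∈ Ioo (0:ℝ) 1, ∀ δ ∈ Ioo (0:ℝ) δ₀,
    ∃ n, ∃ B : Fin n → Set α, X ⊆ (⋃ i, B i) ∧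
      (∀ i, Metric.diam (B i) ∈ Icc (δ ^ (1/θ)) δ) ∧
      ∑ i, Metric.diam (B i) ^ s < ε}

/-- Assouad spectrum at `θ` (localisation at arbitrary centres `x`). -/
noncomputable def assouadSpec {α : Type*} [PseudoMetricSpace α] (θ : ℝ) (X : Set α) : ℝ :=
  sInf {s : ℝ | 0 ≤ s ∧ ∃ C > (0:ℝ), ∀ r ∈ Ioo (0:ℝ) 1, ∀ x : α,
    (coverNum (X ∩ closedBall x (r ^ θ)) r : ℝ) ≤ C * (r ^ θ / r) ^ s}

/-- Assouad spectrum at `θ` (localisation at centres `x ∈ X`). -/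
noncomputable def assouadSpecOn {α : Type*} [PseudoMetricSpace α] (θ : ℝ) (X : Set α) : ℝ :=
  sInf {s : ℝ | 0 ≤ s ∧ ∃ C > (0:ℝ), ∀ r ∈ Ioo (0:ℝ) 1, ∀ x ∈ X,
    (coverNum (X ∩ closedBall x (r ^ θ)) r : ℝ) ≤ C * (r ^ θ / r) ^ s}

/-- The set `X = {1/n : n ∈ ℕ, n ≥ 1} ⊆ ℝ`. -/
def recipSet : Set ℝ := {x : ℝ | ∃ n : ℕ, 1 ≤ n ∧ x = 1 / (n : ℝ)}

end

lemma coversWith_Icc (X : Set ℝ) (a L r : ℝ) (hr : 0 < r) (hX : X ⊆ Icc a (a + L)) :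
    coversWith X r (⌈L / r⌉₊ + 1) := by
  refine ⟨fun i => Icc (a + (i : ℕ) * r) (a + (i : ℕ) * r + r), fun i => ?_, fun y hy => ?_⟩
  · show Metric.ediam (Icc _ _) ≤ _
    rw [Real.ediam_Icc]
    simp
  · have hy' := hX hy
    have hya : a ≤ y := hy'.1
    have hyL : y ≤ a + L := hy'.2
    set i0 := ⌊(y - a) / r⌋₊ with hi0def
    have hi0 : i0 ≤ ⌈L / r⌉₊ := by
      refine le_trans (Nat.floor_le_floor ?_) (Nat.floor_le_ceil _)
      gcongr
      linarith
    refine mem_iUnion.2 ⟨⟨i0, by omega⟩, ?_, ?_⟩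
    · have h1 : (i0 : ℝ) ≤ (y - a) / r := Nat.floor_le (div_nonneg (by linarith) hr.le)
      have := (le_div_iff₀ hr).mp h1
      simpa using by linarith
    · have h2 : (y - a) / r < i0 + 1 := Nat.lt_floor_add_one _
      have := (div_lt_iff₀ hr).mp h2
      simp only [Fin.val_mk]
      nlinarith

lemma le_coverNum {α : Type*} [PseudoMetricSpace α] {X : Set α} {r : ℝ} (hr : 0 ≤ r) {k : ℕ}
    (p : Fin k → α) (hp : ∀ i, p i ∈ X) (hsep : ∀ i j, i ≠ j → r < dist (p i) (p j))
    (hne : {n : ℕ | coversWith X r n}.Nonempty) : k ≤ coverNum X r := by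
  have hmem : coversWith X r (coverNum X r) := Nat.sInf_mem hne
  obtain ⟨B, hd, hcov⟩ := hmem
  have hchoice : ∀ i : Fin k, ∃ j, p i ∈ B j := fun i => mem_iUnion.1 (hcov (hp i))
  choose f hf using hchoice
  have hinj : Function.Injective f := by
    intro i j hij
    by_contra hne'
    have h1 : edist (p i) (p j) ≤ EMetric.diam (B (f i)) :=
      EMetric.edist_le_diam_of_mem (hf i) (hij ▸ hf j)
    have h2 : edist (p i) (p j) ≤ ENNReal.ofReal r := h1.trans (hd _)
    rw [edist_dist] at h2
    have h3 : dist (p i) (p j) ≤ r := (ENNReal.ofReal_le_ofReal_iff hr).mp h2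
    exact absurd h3 (not_le.2 (hsep i j hne'))
  simpa using Fintype.card_le_of_injective f hinj

lemma sep_aux {m a b : ℕ} (hm : 1 ≤ m) (ha : m ≤ a) (hb2 : b ≤ 2 * m) (hab : a < b) :
    1 / (8 * (m : ℝ) ^ 2) < 1 / (a : ℝ) - 1 / (b : ℝ) := by
  have hma : (1:ℝ) ≤ m := by exact_mod_cast hm
  have haR : (1:ℝ) ≤ a := by exact_mod_cast hm.trans ha
  have hbR : (1:ℝ) ≤ b := by exact_mod_cast hm.trans (ha.trans hab.le)
  have hbaR : (a:ℝ) + 1 ≤ b := by exact_mod_cast hab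
  have ha2R : (a:ℝ) ≤ 2 * m := by exact_mod_cast (hab.le.trans hb2)
  have hb2R : (b:ℝ) ≤ 2 * m := by exact_mod_cast hb2
  have hA : (0:ℝ) < a := by linarith
  have hB : (0:ℝ) < b := by linarith
  rw [div_sub_div _ _ (ne_of_gt hA) (ne_of_gt hB), div_lt_div_iff₀ (by positivity) (by positivity)]
  nlinarith [mul_le_mul ha2R hb2R hB.le (by linarith : (0:ℝ) ≤ 2 * m)]

theorem stmt4 : assouadDim recipSet = 1 := by
  set S := {s : ℝ | 0 ≤ s ∧ ∃ C > (0:ℝ), ∀ R > (0:ℝ), ∀ r ∈ Ioo (0:ℝ) R, ∀ x : ℝ,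
    (coverNum (recipSet ∩ closedBall x R) r : ℝ) ≤ C * (R / r) ^ s} with hS
  have hcov : ∀ (R r x : ℝ), 0 < r →
      coversWith (recipSet ∩ closedBall x R) r (⌈2 * R / r⌉₊ + 1) := by
    intro R r x hr
    apply coversWith_Icc _ (x - R) (2 * R) r hr
    intro y hy
    have h := hy.2
    rw [Real.closedBall_eq_Icc] at h
    exact ⟨h.1, by linarith [h.2]⟩
  have h1mem : (1:ℝ) ∈ S := by
    refine ⟨zero_le_one, 4, by norm_num, fun R hR r hr x => ?_⟩
    have hrR : r < R := hr.2
    have hr0 : 0 < r := hr.1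
    have hle : coverNum (recipSet ∩ closedBall x R) r ≤ ⌈2 * R / r⌉₊ + 1 :=
      Nat.sInf_le (hcov R r x hr0)
    have hceil : (⌈2 * R / r⌉₊ : ℝ) < 2 * R / r + 1 :=
      Nat.ceil_lt_add_one (by positivity)
    have hRr : 1 ≤ R / r := (one_le_div hr0).2 hrR.le
    have hle' : (coverNum (recipSet ∩ closedBall x R) r : ℝ) ≤ (⌈2 * R / r⌉₊ : ℝ) + 1 := by
      exact_mod_cast hle
    rw [Real.rpow_one]
    have h2 : 2 * R / r = 2 * (R / r) := by ring
    rw [h2] at hceil hle'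
    linarith
  have hlow : ∀ s ∈ S, (1:ℝ) ≤ s := by
    intro s hs
    obtain ⟨hs0, C, hC, hbound⟩ := hs
    by_contra hlt
    push_neg at hlt
    have h1s : 0 < 1 - s := by linarith
    obtain ⟨m0, hm0⟩ := exists_nat_ge ((16 * C) ^ ((1:ℝ) / (1 - s)))
    set m := max m0 1 with hmdef
    have hm1 : 1 ≤ m := le_max_right _ _
    have hmR : (1:ℝ) ≤ m := by exact_mod_cast hm1
    have hmpos : (0:ℝ) < m := by linarith
    have hmge : (16 * C) ^ ((1:ℝ) / (1 - s)) ≤ (m:ℝ) :=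
      hm0.trans (by exact_mod_cast le_max_left m0 1)
    set R := 1 / (m:ℝ) with hRdef
    set r := 1 / (8 * (m:ℝ) ^ 2) with hrdef
    have hR : 0 < R := by positivity
    have hr0 : 0 < r := by positivity
    have hrR : r < R := by
      rw [hrdef, hRdef, div_lt_div_iff₀ (by positivity) hmpos]
      nlinarith
    have hkey := hbound R hR r ⟨hr0, hrR⟩ 0
    have hpts : (m + 1 : ℕ) ≤ coverNum (recipSet ∩ closedBall 0 R) r := by
      refine le_coverNum hr0.le (fun j => 1 / ((m + (j:ℕ) : ℕ) : ℝ)) ?_ ?_ ?_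
      · intro j
        refine ⟨⟨m + (j:ℕ), by omega, rfl⟩, ?_⟩
        rw [mem_closedBall, dist_zero_right, Real.norm_eq_abs, hRdef]
        have h1 : (m:ℝ) ≤ ((m + (j:ℕ) : ℕ) : ℝ) := by exact_mod_cast Nat.le_add_right m j
        rw [abs_of_nonneg (by positivity)]
        exact one_div_le_one_div_of_le hmpos h1
      · intro i j hij
        have hij' : (i:ℕ) ≠ (j:ℕ) := fun h => hij (Fin.ext h)
        have hi' := i.isLt
        have hj' := j.isLt
        rcases hij'.lt_or_gt with h | h
        · have hsep := sep_aux hm1 (Nat.le_add_right m i) (by omega : m + (j:ℕ) ≤ 2 * m)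
            (by omega : m + (i:ℕ) < m + (j:ℕ))
          rw [Real.dist_eq]
          exact lt_of_lt_of_le hsep (le_abs_self _)
        · have hsep := sep_aux hm1 (Nat.le_add_right m j) (by omega : m + (i:ℕ) ≤ 2 * m)
            (by omega : m + (j:ℕ) < m + (i:ℕ))
          rw [dist_comm, Real.dist_eq]
          exact lt_of_lt_of_le hsep (le_abs_self _)
      · exact ⟨_, hcov R r 0 hr0⟩
    have hpts' : (m:ℝ) + 1 ≤ C * (R / r) ^ s := by
      refine le_trans ?_ hkey
      exact_mod_cast hpts
    have hRr8 : R / r = 8 * m := by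
      rw [hRdef, hrdef]
      field_simp
    rw [hRr8] at hpts'
    have hms : (0:ℝ) < (m:ℝ) ^ s := Real.rpow_pos_of_pos hmpos s
    have h8m : ((8:ℝ) * m) ^ s = 8 ^ s * (m:ℝ) ^ s := Real.mul_rpow (by norm_num) hmpos.le
    have h8s : (8:ℝ) ^ s ≤ 8 := by
      calc (8:ℝ) ^ s ≤ 8 ^ (1:ℝ) := Real.rpow_le_rpow_of_exponent_le (by norm_num) hlt.le
      _ = 8 := Real.rpow_one 8
    have hm1s : 16 * C ≤ (m:ℝ) ^ (1 - s) := by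
      have h := Real.rpow_le_rpow (by positivity) hmge h1s.le
      rwa [← Real.rpow_mul (by positivity), one_div_mul_cancel h1s.ne', Real.rpow_one] at h
    have hsplit : (m:ℝ) ^ s * (m:ℝ) ^ (1 - s) = (m:ℝ) := by
      rw [← Real.rpow_add hmpos]
      norm_num
    have hup : (m:ℝ) ^ s * (16 * C) ≤ (m:ℝ) := by
      calc (m:ℝ) ^ s * (16 * C) ≤ (m:ℝ) ^ s * (m:ℝ) ^ (1 - s) :=
        mul_le_mul_of_nonneg_left hm1s hms.le
      _ = m := hsplit
    rw [h8m] at hpts'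
    have h4 : C * (8 ^ s * (m:ℝ) ^ s) ≤ C * (8 * (m:ℝ) ^ s) := by
      apply mul_le_mul_of_nonneg_left _ hC.le
      exact mul_le_mul_of_nonneg_right h8s hms.le
    nlinarith [mul_pos hC hms]
  have hSne : S.Nonempty := ⟨1, h1mem⟩
  have hbdd : BddBelow S := ⟨1, hlow⟩
  exact le_antisymm (csInf_le hbdd h1mem) (le_csInf hSne hlow)
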